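/- Let A ∈ M_n(ℂ) with tr(A) = 0 and rank(A) = 1, and q ∈ ℝ. Then for all B ∈ M_n(ℂ), ‖AB − qBA‖_F² ≤ (1 + q²)‖A‖_F²‖B‖_F². -/

import Mathlib

open Matrix
open scoped BigOperators Matrix
open Complex Finset
open scoped ComplexConjugate

noncomputable def frobSq {n : ℕ} (M : Matrix (Fin n) (Fin n) ℂ) : ℝ :=
  ∑ i, ∑ j, ‖M i j‖ ^ 2

variable {n : ℕ}



noncomputable def toE (y : Fin n → ℂ) : EuclideanSpace ℂ (Fin n) := (WithLp.equiv 2 _).symm y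

lemma toE_apply (y : Fin n → ℂ) (i : Fin n) : toE y i = y i := rfl

lemma toE_inner (y z : Fin n → ℂ) : inner ℂ (toE y) (toE z) = ∑ i, conj (y i) * z i := by
  rw [PiLp.inner_apply]
  exact Finset.sum_congr rfl fun i _ => by rw [RCLike.inner_apply]; exact mul_comm _ _

lemma toE_norm_sq (y : Fin n → ℂ) : ‖toE y‖ ^ 2 = ∑ i, ‖y i‖ ^ 2 := by
  rw [EuclideanSpace.norm_eq, Real.sq_sqrt (by positivity)]
  rfl

lemma cs2 (y z : Fin n → ℂ) :
    ‖∑ i, conj (y i) * z i‖ ^ 2 ≤ (∑ i, ‖y i‖ ^ 2) * (∑ i, ‖z i‖ ^ 2) := by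
  have h := norm_inner_le_norm (𝕜 := ℂ) (toE y) (toE z)
  have h2 : ‖inner ℂ (toE y) (toE z)‖ ^ 2 ≤ (‖toE y‖ * ‖toE z‖) ^ 2 :=
    pow_le_pow_left₀ (norm_nonneg _) h 2
  rw [toE_inner] at h2
  rw [mul_pow, toE_norm_sq, toE_norm_sq] at h2
  exact h2

lemma norm_one_of_sum (y : Fin n → ℂ) (hy : ∑ i, ‖y i‖ ^ 2 = 1) : ‖toE y‖ = 1 := by
  have := toE_norm_sq y
  rw [hy] at this
  nlinarith [norm_nonneg (toE y)]

lemma bessel2 (p r c : Fin n → ℂ) (hp : ∑ i, ‖p i‖ ^ 2 = 1) (hr : ∑ i, ‖r i‖ ^ 2 = 1)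
    (hpr : ∑ i, conj (r i) * p i = 0) :
    ‖∑ i, conj (p i) * c i‖ ^ 2 + ‖∑ i, conj (r i) * c i‖ ^ 2 ≤ ∑ i, ‖c i‖ ^ 2 := by
  have hRP : inner ℂ (toE r) (toE p) = 0 := by rw [toE_inner]; exact hpr
  have hPR : inner ℂ (toE p) (toE r) = 0 := by
    rw [← inner_conj_symm, hRP, map_zero]
  have hnP : ‖toE p‖ = 1 := norm_one_of_sum p hp
  have hnR : ‖toE r‖ = 1 := norm_one_of_sum r hr
  have hon : Orthonormal ℂ ![toE p, toE r] := by
    rw [orthonormal_iff_ite]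
    intro i j
    fin_cases i <;> fin_cases j <;>
      simp [hPR, hRP, inner_self_eq_norm_sq_to_K, hnP, hnR]
  have h := hon.sum_inner_products_le (s := Finset.univ) (toE c)
  rw [Fin.sum_univ_two] at h
  simp only [Matrix.cons_val_zero, Matrix.cons_val_one, Matrix.head_cons] at h
  rw [toE_inner, toE_inner] at h
  refine h.trans ?_
  rw [toE_norm_sq]


lemma pt (a b c d : ℂ) (q : ℝ) :
    ‖a * c - (q : ℂ) * (b * d)‖ ^ 2
      = ‖a‖ ^ 2 * ‖c‖ ^ 2 + q ^ 2 * (‖b‖ ^ 2 * ‖d‖ ^ 2)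
        - 2 * q * ((a * conj b) * (c * conj d)).re := by
  have h : ∀ z : ℂ, ‖z‖ ^ 2 = normSq z := fun z => by
    rw [← Complex.sq_norm]
  rw [h, h, h, h, h]
  simp only [Complex.normSq_apply, Complex.sub_re, Complex.sub_im, Complex.mul_re, Complex.mul_im,
    Complex.ofReal_re, Complex.ofReal_im, Complex.conj_re, Complex.conj_im]
  ring

lemma expand (p r x g : Fin n → ℂ) (q : ℝ) :
    ∑ i, ∑ j, ‖p i * g j - (q : ℂ) * (x i * conj (r j))‖ ^ 2
      = (∑ i, ‖p i‖ ^ 2) * (∑ j, ‖g j‖ ^ 2)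
        + q ^ 2 * ((∑ i, ‖x i‖ ^ 2) * (∑ j, ‖r j‖ ^ 2))
        - 2 * q * ((∑ i, p i * conj (x i)) * (∑ j, g j * r j)).re := by
  have step1 : ∑ i, ∑ j, ‖p i * g j - (q : ℂ) * (x i * conj (r j))‖ ^ 2
      = ∑ i, ∑ j, (‖p i‖ ^ 2 * ‖g j‖ ^ 2 + q ^ 2 * (‖x i‖ ^ 2 * ‖conj (r j)‖ ^ 2)
          - 2 * q * ((p i * conj (x i)) * (g j * conj (conj (r j)))).re) :=
    Finset.sum_congr rfl fun i _ => Finset.sum_congr rfl fun j _ => pt _ _ _ _ q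
  rw [step1]
  have h1 : (∑ i, ‖p i‖ ^ 2) * (∑ j, ‖g j‖ ^ 2) = ∑ i, ∑ j, ‖p i‖ ^ 2 * ‖g j‖ ^ 2 :=
    Finset.sum_mul_sum _ _ _ _
  have h2 : (∑ i, ‖x i‖ ^ 2) * (∑ j, ‖r j‖ ^ 2) = ∑ i, ∑ j, ‖x i‖ ^ 2 * ‖conj (r j)‖ ^ 2 := by
    simp only [RCLike.norm_conj]
    exact Finset.sum_mul_sum _ _ _ _
  have h3 : ((∑ i, p i * conj (x i)) * (∑ j, g j * r j)).re
      = ∑ i, ∑ j, ((p i * conj (x i)) * (g j * conj (conj (r j)))).re := by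
    simp only [RingHomCompTriple.comp_apply, RingHom.id_apply, Complex.conj_conj]
    rw [Finset.sum_mul_sum, Complex.re_sum]
    exact Finset.sum_congr rfl fun i _ => Complex.re_sum _ _
  rw [h1, h2, h3, Finset.mul_sum (a := (q:ℝ)^2), Finset.mul_sum (a := 2*q)]
  rw [← Finset.sum_add_distrib, ← Finset.sum_sub_distrib]
  refine Finset.sum_congr rfl fun i _ => ?_
  rw [Finset.mul_sum (a := (q:ℝ)^2), Finset.mul_sum (a := 2*q)]
  rw [← Finset.sum_add_distrib, ← Finset.sum_sub_distrib]

lemma conj_push (y c : Fin n → ℂ) :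
    conj (∑ k, c k * y k) = ∑ k, conj (y k) * conj (c k) := by
  rw [map_sum]
  exact Finset.sum_congr rfl fun k _ => by rw [_root_.map_mul, mul_comm]

lemma swapS (p : Fin n → ℂ) (B : Matrix (Fin n) (Fin n) ℂ) :
    ∑ j, (∑ k, conj (p k) * B k j) * p j
      = conj (∑ i, p i * conj (∑ k, B i k * p k)) := by
  rw [map_sum]
  have : ∀ i, conj (p i * conj (∑ k, B i k * p k)) = conj (p i) * (∑ k, B i k * p k) := by
    intro i
    rw [_root_.map_mul, Complex.conj_conj]
  simp only [this]
  simp only [Finset.sum_mul, Finset.mul_sum]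
  rw [Finset.sum_comm]
  exact Finset.sum_congr rfl fun k _ => Finset.sum_congr rfl fun j _ => by ring

lemma swapT (r : Fin n → ℂ) (B : Matrix (Fin n) (Fin n) ℂ) :
    ∑ k, conj (r k) * (∑ l, B k l * r l)
      = ∑ j, (∑ k, conj (r k) * B k j) * r j := by
  simp only [Finset.sum_mul, Finset.mul_sum]
  rw [Finset.sum_comm]
  exact Finset.sum_congr rfl fun k _ => Finset.sum_congr rfl fun j _ => by ring

lemma core (p r : Fin n → ℂ) (hp : ∑ i, ‖p i‖ ^ 2 = 1) (hr : ∑ i, ‖r i‖ ^ 2 = 1)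
    (hpr : ∑ i, conj (r i) * p i = 0) (q : ℝ) (B : Matrix (Fin n) (Fin n) ℂ) :
    ∑ i, ∑ j, ‖p i * (∑ k, conj (r k) * B k j)
        - (q : ℂ) * ((∑ k, B i k * p k) * conj (r j))‖ ^ 2
      ≤ (1 + q ^ 2) * frobSq B := by
  have hexp := expand p r (fun i => ∑ k, B i k * p k) (fun j => ∑ k, conj (r k) * B k j) q
  simp only [hp, hr, one_mul, mul_one] at hexp
  rw [hexp]
  set S : ℂ := ∑ i, p i * conj (∑ k, B i k * p k) with hS
  set T : ℂ := ∑ j, (∑ k, conj (r k) * B k j) * r j with hT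
  set G : ℝ := ∑ j, ‖∑ k, conj (r k) * B k j‖ ^ 2 with hG
  set X : ℝ := ∑ i, ‖∑ k, B i k * p k‖ ^ 2 with hX
  set E : ℝ := ∑ j, ‖∑ k, conj (p k) * B k j‖ ^ 2 with hE
  set D : ℝ := ∑ i, ‖∑ k, B i k * r k‖ ^ 2 with hD
  set F : ℝ := frobSq B with hF
  have hGE : G + E ≤ F := by
    have hj : ∀ j : Fin n, ‖∑ k, conj (p k) * B k j‖ ^ 2 + ‖∑ k, conj (r k) * B k j‖ ^ 2
        ≤ ∑ k, ‖B k j‖ ^ 2 := fun j => by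
      have := bessel2 p r (fun k => B k j) hp hr hpr
      simpa using this
    have hsum := Finset.sum_le_sum fun j (_ : j ∈ Finset.univ) => hj j
    rw [Finset.sum_add_distrib] at hsum
    have hcomm : F = ∑ j, ∑ k, ‖B k j‖ ^ 2 := Finset.sum_comm
    rw [hG, hE, hcomm]
    linarith
  have hXD : X + D ≤ F := by
    have hi : ∀ i : Fin n, ‖∑ k, B i k * p k‖ ^ 2 + ‖∑ k, B i k * r k‖ ^ 2
        ≤ ∑ k, ‖B i k‖ ^ 2 := fun i => by
      have h := bessel2 p r (fun k => conj (B i k)) hp hr hpr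
      have h1 : ∑ k, conj (p k) * conj (B i k) = conj (∑ k, B i k * p k) :=
        (conj_push p (fun k => B i k)).symm
      have h2 : ∑ k, conj (r k) * conj (B i k) = conj (∑ k, B i k * r k) :=
        (conj_push r (fun k => B i k)).symm
      simp only [h1, h2, RCLike.norm_conj] at h
      simpa using h
    have hsum := Finset.sum_le_sum fun i (_ : i ∈ Finset.univ) => hi i
    rw [Finset.sum_add_distrib] at hsum
    rw [hX, hD, hF, frobSq]
    linarith
  have hSE : ‖S‖ ^ 2 ≤ E := by
    have hcs := cs2 (fun j => conj (∑ k, conj (p k) * B k j)) p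
    simp only [Complex.conj_conj, RCLike.norm_conj] at hcs
    rw [swapS p B, hp, mul_one] at hcs
    rw [hS]
    calc ‖S‖ ^ 2 = ‖conj S‖ ^ 2 := by rw [RCLike.norm_conj]
      _ ≤ E := by rw [hE]; exact hcs
  have hTD : ‖T‖ ^ 2 ≤ D := by
    have hcs := cs2 r (fun k => ∑ l, B k l * r l)
    rw [swapT r B, hr, one_mul] at hcs
    rw [hT, hD]
    exact hcs
  have hre : |(S * T).re| ≤ ‖S‖ * ‖T‖ := by
    have h1 : |(S * T).re| ≤ ‖S * T‖ := Complex.abs_re_le_norm _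
    have h2 : ‖S * T‖ = ‖S‖ * ‖T‖ := by rw [norm_mul]
    linarith
  have h4 : -(2 * q * (S * T).re) ≤ 2 * |q| * (‖S‖ * ‖T‖) := by
    have h5 : -(2 * q * (S * T).re) ≤ |2 * q * (S * T).re| := neg_le_abs _
    have h6 : |2 * q * (S * T).re| = 2 * |q| * |(S * T).re| := by
      rw [abs_mul, abs_mul]; simp
    have h7 : 2 * |q| * |(S * T).re| ≤ 2 * |q| * (‖S‖ * ‖T‖) :=
      mul_le_mul_of_nonneg_left hre (by positivity)
    linarith
  have h5 : 2 * |q| * (‖S‖ * ‖T‖) ≤ ‖S‖ ^ 2 + q ^ 2 * ‖T‖ ^ 2 := by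
    nlinarith [sq_nonneg (‖S‖ - |q| * ‖T‖), _root_.sq_abs q, abs_nonneg q,
      norm_nonneg S, norm_nonneg T]
  have hq2 : q ^ 2 * (X + D) ≤ q ^ 2 * F := mul_le_mul_of_nonneg_left hXD (sq_nonneg q)
  nlinarith [hGE, hSE, hTD, h4, h5, hq2, sq_nonneg q]

set_option maxHeartbeats 1000000 in
theorem stmt_17 {n : ℕ} (A : Matrix (Fin n) (Fin n) ℂ)
    (hA : A.trace = 0) (hrk : A.rank = 1) (q : ℝ) :
    ∀ B : Matrix (Fin n) (Fin n) ℂ,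
      frobSq (A * B - (q : ℂ) • (B * A)) ≤ (1 + q ^ 2) * frobSq A * frobSq B := by
  intro B
  -- rank-one decomposition
  have hrk' : Module.finrank ℂ ↥(LinearMap.range A.mulVecLin) = 1 := hrk
  obtain ⟨w₀, hw0, hw⟩ := finrank_eq_one_iff'.mp hrk'
  have hcol : ∀ j : Fin n, ∃ c : ℂ, ∀ i, c * (w₀ : Fin n → ℂ) i = A i j := by
    intro j
    obtain ⟨c, hc⟩ := hw ⟨A *ᵥ Pi.single j 1, ⟨Pi.single j 1, rfl⟩⟩
    refine ⟨c, fun i => ?_⟩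
    have := congrArg (fun w : ↥(LinearMap.range A.mulVecLin) => (w : Fin n → ℂ) i) hc
    simpa [Matrix.mulVec_single] using this
  choose v hv using hcol
  set u : Fin n → ℂ := fun i => (w₀ : Fin n → ℂ) i with hu
  have hAuv : ∀ i j, A i j = u i * v j := fun i j => by rw [← hv j i]; ring
  have hune : u ≠ 0 := by
    intro h
    apply hw0
    ext i
    exact congrFun h i
  have hvne : v ≠ 0 := by
    intro h
    have hA0 : A = 0 := by
      ext i j
      rw [hAuv i j, h]
      simp
    rw [hA0, Matrix.rank_zero] at hrk
    exact absurd hrk (by norm_num)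
  -- positivity of norms
  have hsu : 0 < ∑ i, ‖u i‖ ^ 2 := by
    obtain ⟨i, hi⟩ := Function.ne_iff.mp hune
    refine Finset.sum_pos' (fun i _ => by positivity) ⟨i, Finset.mem_univ i, ?_⟩
    exact pow_pos (norm_pos_iff.mpr hi) 2
  have hsv : 0 < ∑ j, ‖v j‖ ^ 2 := by
    obtain ⟨j, hj⟩ := Function.ne_iff.mp hvne
    refine Finset.sum_pos' (fun j _ => by positivity) ⟨j, Finset.mem_univ j, ?_⟩
    exact pow_pos (norm_pos_iff.mpr hj) 2
  set cu : ℝ := Real.sqrt (∑ i, ‖u i‖ ^ 2) with hcu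
  set cv : ℝ := Real.sqrt (∑ j, ‖v j‖ ^ 2) with hcv
  have hcup : 0 < cu := Real.sqrt_pos.mpr hsu
  have hcvp : 0 < cv := Real.sqrt_pos.mpr hsv
  have hcu2 : cu ^ 2 = ∑ i, ‖u i‖ ^ 2 := Real.sq_sqrt hsu.le
  have hcv2 : cv ^ 2 = ∑ j, ‖v j‖ ^ 2 := Real.sq_sqrt hsv.le
  have hcune : ((cu : ℝ) : ℂ) ≠ 0 := by exact_mod_cast hcup.ne'
  have hcvne : ((cv : ℝ) : ℂ) ≠ 0 := by exact_mod_cast hcvp.ne'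
  set p : Fin n → ℂ := fun i => ((cu : ℝ) : ℂ)⁻¹ * u i with hpdef
  set r : Fin n → ℂ := fun j => ((cv : ℝ) : ℂ)⁻¹ * conj (v j) with hrdef
  have hconjr : ∀ j, conj (r j) = ((cv : ℝ) : ℂ)⁻¹ * v j := fun j => by
    simp [hrdef]
  have hnormp : ∀ i, ‖p i‖ ^ 2 = cu⁻¹ ^ 2 * ‖u i‖ ^ 2 := fun i => by
    simp [hpdef, norm_mul, mul_pow, abs_of_pos hcup]
  have hnormr : ∀ j, ‖r j‖ ^ 2 = cv⁻¹ ^ 2 * ‖v j‖ ^ 2 := fun j => by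
    simp [hrdef, norm_mul, mul_pow, abs_of_pos hcvp]
  have hp : ∑ i, ‖p i‖ ^ 2 = 1 := by
    simp only [hnormp]
    rw [← Finset.mul_sum, ← hcu2]
    field_simp
  have hr : ∑ j, ‖r j‖ ^ 2 = 1 := by
    simp only [hnormr]
    rw [← Finset.mul_sum, ← hcv2]
    field_simp
  have htr : ∑ i, u i * v i = 0 := by
    have : A.trace = ∑ i, u i * v i := by
      rw [Matrix.trace]
      exact Finset.sum_congr rfl fun i _ => hAuv i i
    rw [← this, hA]
  have hpr : ∑ i, conj (r i) * p i = 0 := by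
    have : ∑ i, conj (r i) * p i
        = (((cu : ℝ) : ℂ)⁻¹ * ((cv : ℝ) : ℂ)⁻¹) * ∑ i, u i * v i := by
      rw [Finset.mul_sum]
      refine Finset.sum_congr rfl fun i _ => ?_
      rw [hconjr, hpdef]
      ring
    rw [this, htr, mul_zero]
  -- entrywise identity
  set c : ℂ := ((cu : ℝ) : ℂ) * ((cv : ℝ) : ℂ) with hcdef
  have key : ∀ i j, (A * B - (q : ℂ) • (B * A)) i j
      = c * (p i * (∑ k, conj (r k) * B k j)
          - (q : ℂ) * ((∑ k, B i k * p k) * conj (r j))) := by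
    intro i j
    simp only [Matrix.sub_apply, Matrix.smul_apply, Matrix.mul_apply, smul_eq_mul]
    rw [mul_sub]
    have h1 : ∑ k, A i k * B k j = c * (p i * ∑ k, conj (r k) * B k j) := by
      rw [Finset.mul_sum, Finset.mul_sum]
      refine Finset.sum_congr rfl fun k _ => ?_
      rw [hAuv i k, hconjr, hpdef, hcdef]
      have hrear : ((cu:ℝ):ℂ) * ((cv:ℝ):ℂ) * ((((cu:ℝ):ℂ))⁻¹ * u i * ((((cv:ℝ):ℂ))⁻¹ * v k * B k j))
          = (((cu:ℝ):ℂ) * (((cu:ℝ):ℂ))⁻¹) * ((((cv:ℝ):ℂ)) * ((((cv:ℝ):ℂ))⁻¹)) * (u i * v k * B k j) := by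
        ring
      rw [hrear, mul_inv_cancel₀ hcune, mul_inv_cancel₀ hcvne, one_mul, one_mul]
    have h2 : (q : ℂ) * ∑ k, B i k * A k j
        = c * ((q : ℂ) * ((∑ k, B i k * p k) * conj (r j))) := by
      rw [Finset.mul_sum]
      simp only [Finset.sum_mul, Finset.mul_sum]
      refine Finset.sum_congr rfl fun k _ => ?_
      rw [hAuv k j, hconjr, hpdef, hcdef]
      have hrear : ((cu:ℝ):ℂ) * ((cv:ℝ):ℂ) * ((q:ℂ) * (B i k * ((((cu:ℝ):ℂ))⁻¹ * u k) * ((((cv:ℝ):ℂ))⁻¹ * v j)))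
          = (((cu:ℝ):ℂ) * (((cu:ℝ):ℂ))⁻¹) * ((((cv:ℝ):ℂ)) * ((((cv:ℝ):ℂ))⁻¹)) * ((q:ℂ) * (B i k * (u k * v j))) := by
        ring
      rw [hrear, mul_inv_cancel₀ hcune, mul_inv_cancel₀ hcvne, one_mul, one_mul]
    rw [h1, h2]
  -- frobSq of scaled matrix
  have hnc : ‖c‖ ^ 2 = cu ^ 2 * cv ^ 2 := by
    rw [hcdef, norm_mul, mul_pow]
    simp [abs_of_pos hcup, abs_of_pos hcvp]
  have hfA : frobSq A = cu ^ 2 * cv ^ 2 := by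
    rw [frobSq, hcu2, hcv2, Finset.sum_mul_sum]
    refine Finset.sum_congr rfl fun i _ => Finset.sum_congr rfl fun j _ => ?_
    rw [hAuv i j, norm_mul, mul_pow]
  have hM : frobSq (A * B - (q : ℂ) • (B * A))
      = cu ^ 2 * cv ^ 2 * ∑ i, ∑ j, ‖p i * (∑ k, conj (r k) * B k j)
          - (q : ℂ) * ((∑ k, B i k * p k) * conj (r j))‖ ^ 2 := by
    rw [frobSq, Finset.mul_sum]
    refine Finset.sum_congr rfl fun i _ => ?_
    rw [Finset.mul_sum]
    refine Finset.sum_congr rfl fun j _ => ?_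
    rw [key i j, norm_mul, mul_pow, hnc]
  rw [hM, hfA]
  have hcore := core p r hp hr hpr q B
  have hnn : (0:ℝ) ≤ cu ^ 2 * cv ^ 2 := mul_nonneg (sq_nonneg cu) (sq_nonneg cv)
  have h := mul_le_mul_of_nonneg_left hcore hnn
  refine le_trans h (le_of_eq ?_)
  ring
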